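/- In the class of all groups, the generator distance between the Klein four-group V_4 = (ℤ/2ℤ) × (ℤ/2ℤ) and the quaternion group Q_8 equals 2. -/

import Mathlib

set_option maxHeartbeats 1000000

open CategoryTheory

namespace GrpNetwork

/-- `A` is largely embeddable into `B` in the class of all groups: `B` has a subgroup
`H` isomorphic to `A` such that `H` together with one extra element generates `B`. -/
def LargeEmb (A B : GrpCat.{0}) : Prop :=
  ∃ H : Subgroup B, Nonempty (A ≃* H) ∧ ∃ b : B, Subgroup.closure (↑H ∪ {b}) = ⊤

/-- A path of length `n` between `A` and `B` in the network of large embeddings of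
the class of all groups. -/
def HasPath (A B : GrpCat.{0}) (n : ℕ) : Prop :=
  ∃ C : ℕ → GrpCat.{0}, Nonempty ((C 0) ≃* A) ∧ Nonempty ((C n) ≃* B) ∧
    ∀ i < n, LargeEmb (C i) (C (i + 1)) ∨ LargeEmb (C (i + 1)) (C i)

/-- The generator distance in the class of all groups, in `ℕ ∪ {∞}`. -/
noncomputable def dis (A B : GrpCat.{0}) : ℕ∞ :=
  sInf {q : ℕ∞ | ∃ n : ℕ, q = (n : ℕ∞) ∧ HasPath A B n}

end GrpNetwork

/-! ### The semidihedral group of order 16, built concretely. -/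

structure G16 where
  val : Fin 8 × Fin 2
deriving DecidableEq, Fintype

instance : Mul G16 :=
  ⟨fun x y => ⟨(x.val.1 + (if x.val.2 = 0 then y.val.1 else 3 * y.val.1), x.val.2 + y.val.2)⟩⟩
instance : One G16 := ⟨⟨(0, 0)⟩⟩
instance : Inv G16 :=
  ⟨fun x => ⟨(if x.val.2 = 0 then -x.val.1 else -(3 * x.val.1), x.val.2)⟩⟩

instance : Group G16 where
  mul_assoc := by decide
  one_mul := by decide
  mul_one := by decide
  inv_mul_cancel := by decide

/-- The embedding of the Klein four-group into `G16`. -/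
def fV : Multiplicative (ZMod 2 × ZMod 2) → G16 :=
  fun x => ⟨(⟨4 * (x.toAdd.1.val) % 8, by omega⟩, ⟨x.toAdd.2.val % 2, by omega⟩)⟩

lemma fV_mul : ∀ x y, fV (x * y) = fV x * fV y := by decide

lemma fV_inj : Function.Injective fV := by
  intro a b h
  revert h; revert a b; decide

/-- The embedding of the quaternion group into `G16`. -/
def fQ : QuaternionGroup 2 → G16 :=
  fun x => match x with
  | .a m => ⟨(⟨2 * m.val % 8, by omega⟩, 0)⟩
  | .xa m => ⟨(⟨(1 + 6 * m.val) % 8, by omega⟩, 1)⟩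

lemma fQ_mul : ∀ x y, fQ (x * y) = fQ x * fQ y := by decide

lemma fQ_inj : Function.Injective fQ := by
  intro a b h
  revert h; revert a b; decide

def homV : Multiplicative (ZMod 2 × ZMod 2) →* G16 := MonoidHom.mk' fV fV_mul
def homQ : QuaternionGroup 2 →* G16 := MonoidHom.mk' fQ fQ_mul

def g16r : G16 := ⟨(1, 0)⟩
def g16s : G16 := ⟨(0, 1)⟩

lemma g16_gen : ∀ x : G16, x = g16r ^ (x.val.1.val) * g16s ^ (x.val.2.val) := by decide

lemma largeV : GrpNetwork.LargeEmb (GrpCat.of (Multiplicative (ZMod 2 × ZMod 2))) (GrpCat.of G16) := by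
  refine ⟨homV.range, ⟨MonoidHom.ofInjective (f := homV) fV_inj⟩, g16r, ?_⟩
  rw [eq_top_iff]
  rintro x -
  have hr : g16r ∈ Subgroup.closure ((homV.range : Set G16) ∪ {g16r}) :=
    Subgroup.subset_closure (Or.inr rfl)
  have hs : g16s ∈ Subgroup.closure ((homV.range : Set G16) ∪ {g16r}) :=
    Subgroup.subset_closure (Or.inl ⟨Multiplicative.ofAdd ((0, 1) : ZMod 2 × ZMod 2), by decide⟩)
  rw [g16_gen x]
  exact mul_mem (pow_mem hr _) (pow_mem hs _)

lemma largeQ : GrpNetwork.LargeEmb (GrpCat.of (QuaternionGroup 2)) (GrpCat.of G16) := by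
  refine ⟨homQ.range, ⟨MonoidHom.ofInjective (f := homQ) fQ_inj⟩, g16s, ?_⟩
  rw [eq_top_iff]
  rintro x -
  have hs : g16s ∈ Subgroup.closure ((homQ.range : Set G16) ∪ {g16s}) :=
    Subgroup.subset_closure (Or.inr rfl)
  have hj : (⟨(1, 1)⟩ : G16) ∈ Subgroup.closure ((homQ.range : Set G16) ∪ {g16s}) :=
    Subgroup.subset_closure (Or.inl ⟨QuaternionGroup.xa 0, by decide⟩)
  have hr : g16r ∈ Subgroup.closure ((homQ.range : Set G16) ∪ {g16s}) := by
    have : g16r = (⟨(1, 1)⟩ : G16) * g16s := by decide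
    rw [this]; exact mul_mem hj hs
  rw [g16_gen x]
  exact mul_mem (pow_mem hr _) (pow_mem hs _)

lemma quaternion_sq : ∀ x : QuaternionGroup 2, x * x = 1 → x = 1 ∨ x = QuaternionGroup.a 2 := by
  decide

/-- The middle-vertex path of length two. -/
def Cpath : ℕ → GrpCat.{0}
  | 0 => GrpCat.of (Multiplicative (ZMod 2 × ZMod 2))
  | 1 => GrpCat.of G16
  | _ => GrpCat.of (QuaternionGroup 2)

lemma path2 : GrpNetwork.HasPath (GrpCat.of (Multiplicative (ZMod 2 × ZMod 2)))
    (GrpCat.of (QuaternionGroup 2)) 2 := by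
  refine ⟨Cpath, ⟨MulEquiv.refl _⟩, ⟨MulEquiv.refl _⟩, ?_⟩
  intro i hi
  interval_cases i
  · exact Or.inl largeV
  · exact Or.inr largeQ

/-- in the class of all groups, the generator distance between the Klein
four-group `V₄ = (ℤ/2ℤ) × (ℤ/2ℤ)` and the quaternion group `Q₈` equals 2. -/
theorem dis_klein_quaternion :
    GrpNetwork.dis (GrpCat.of (Multiplicative (ZMod 2 × ZMod 2)))
      (GrpCat.of (QuaternionGroup 2)) = 2 := by
  unfold GrpNetwork.dis
  apply le_antisymm
  · exact sInf_le ⟨2, by norm_num, path2⟩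
  · apply le_sInf
    rintro q ⟨n, rfl, C, ⟨e0⟩, ⟨en⟩, hedge⟩
    match n, en, hedge with
    | 0, en, hedge =>
      exfalso
      have e : Multiplicative (ZMod 2 × ZMod 2) ≃* QuaternionGroup 2 :=
        (e0.symm.trans en : (GrpCat.of (Multiplicative (ZMod 2 × ZMod 2)) : GrpCat) ≃* _)
      have h4 : Nat.card (Multiplicative (ZMod 2 × ZMod 2)) = Nat.card (QuaternionGroup 2) :=
        Nat.card_congr e.toEquiv
      rw [Nat.card_eq_fintype_card, Nat.card_eq_fintype_card, QuaternionGroup.card] at h4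
      simp at h4
    | 1, en, hedge =>
      exfalso
      rcases hedge 0 (by norm_num) with ⟨H, ⟨eH⟩, -⟩ | ⟨H, ⟨eH⟩, -⟩
      · -- V₄ embeds into Q₈
        obtain ⟨g, ginj⟩ : ∃ g : Multiplicative (ZMod 2 × ZMod 2) →* QuaternionGroup 2,
            Function.Injective g :=
          ⟨((en.toMonoidHom.comp H.subtype).comp eH.toMonoidHom).comp e0.symm.toMonoidHom,
            en.injective.comp ((H.subtype_injective).comp
              (eH.injective.comp e0.symm.injective))⟩
        set u : Multiplicative (ZMod 2 × ZMod 2) := Multiplicative.ofAdd (1, 0) with hu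
        set v : Multiplicative (ZMod 2 × ZMod 2) := Multiplicative.ofAdd (0, 1) with hv
        have hgu : g u = QuaternionGroup.a 2 := by
          rcases quaternion_sq (g u) (by rw [← map_mul, show u * u = 1 by decide, map_one]) with
            h | h
          · exact absurd (ginj (h.trans (map_one g).symm)) (by decide)
          · exact h
        have hgv : g v = QuaternionGroup.a 2 := by
          rcases quaternion_sq (g v) (by rw [← map_mul, show v * v = 1 by decide, map_one]) with
            h | h
          · exact absurd (ginj (h.trans (map_one g).symm)) (by decide)
          · exact h
        have : u = v := ginj (hgu.trans hgv.symm)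
        exact absurd this (by decide)
      · -- Q₈ embeds into V₄: impossible by cardinality
        obtain ⟨g, ginj⟩ : ∃ g : QuaternionGroup 2 →* Multiplicative (ZMod 2 × ZMod 2),
            Function.Injective g :=
          ⟨((e0.toMonoidHom.comp H.subtype).comp eH.toMonoidHom).comp en.symm.toMonoidHom,
            e0.injective.comp ((H.subtype_injective).comp
              (eH.injective.comp en.symm.injective))⟩
        have hle := Fintype.card_le_of_injective g ginj
        rw [QuaternionGroup.card] at hle
        simp at hle
    | (k+2), en, hedge =>
      have : (2 : ℕ) ≤ k + 2 := by omega
      exact_mod_cast this
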